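/- Let B ≥ 2 be an integer and n ≥ 1. Then sup_{(x_0,…,x_n) ∈ Δ_n} ∑_{k=0}^n H_B(x_k) = ⌊log_B n⌋ + 1 + n/((B−1)·B^{⌊log_B n⌋}). -/

import Mathlib

open scoped BigOperators

/-- `H_B(x) = ∑_{k=0}^∞ {B^k x}/B^k` where `{y}` is the fractional part. -/
noncomputable def HB (B : ℕ) (x : ℝ) : ℝ :=
  ∑' k : ℕ, Int.fract ((B : ℝ) ^ k * x) / (B : ℝ) ^ k

section Aux

variable {B : ℕ}

lemma hb_one_lt (hB : 2 ≤ B) : (1 : ℝ) < B := by exact_mod_cast (by omega : 1 < B)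

lemma hb_inv_lt (hB : 2 ≤ B) : 1 / (B : ℝ) < 1 := by
  rw [div_lt_one (by linarith [hb_one_lt hB])]; exact hb_one_lt hB

lemma summable_hb (hB : 2 ≤ B) (x : ℝ) :
    Summable (fun k : ℕ => Int.fract ((B : ℝ) ^ k * x) / (B : ℝ) ^ k) := by
  have hBpos : (0 : ℝ) < B := by linarith [hb_one_lt hB]
  refine Summable.of_nonneg_of_le
    (fun k => div_nonneg (Int.fract_nonneg _) (by positivity)) (fun k => ?_)
    (summable_geometric_of_lt_one (by positivity) (hb_inv_lt hB))
  rw [one_div, inv_pow, ← one_div]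
  exact (div_le_div_iff_of_pos_right (by positivity)).2 (Int.fract_lt_one _).le

/-- the majorant sequence -/
noncomputable def maj (B n d : ℕ) : ℕ → ℝ := fun k => if k ≤ d then 1 else (n : ℝ) / (B : ℝ) ^ k

lemma maj_nonneg (n d : ℕ) (k : ℕ) : 0 ≤ maj B n d k := by
  unfold maj; split <;> positivity

lemma summable_maj (hB : 2 ≤ B) (n d : ℕ) : Summable (maj B n d) := by
  have hBpos : (0 : ℝ) < B := by linarith [hb_one_lt hB]
  rw [← summable_nat_add_iff (d + 1)]
  have : (fun k => maj B n d (k + (d + 1))) =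
      fun k => ((n : ℝ) / (B : ℝ) ^ (d + 1)) * (1 / (B : ℝ)) ^ k := by
    funext k
    have hk : ¬ (k + (d + 1) ≤ d) := by omega
    simp only [maj, hk, if_false, pow_add, one_div, inv_pow]
    field_simp
  rw [this]
  exact (summable_geometric_of_lt_one (by positivity) (hb_inv_lt hB)).mul_left _

lemma tsum_maj (hB : 2 ≤ B) (n d : ℕ) :
    ∑' k, maj B n d k = (d : ℝ) + 1 + (n : ℝ) / (((B : ℝ) - 1) * (B : ℝ) ^ d) := by
  have hBpos : (0 : ℝ) < B := by linarith [hb_one_lt hB]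
  have hB1 : (B : ℝ) - 1 ≠ 0 := by have := hb_one_lt hB; linarith
  have hBne : (B : ℝ) ≠ 0 := ne_of_gt hBpos
  rw [← Summable.sum_add_tsum_nat_add (d + 1) (summable_maj hB n d)]
  have h1 : ∑ k ∈ Finset.range (d + 1), maj B n d k = (d : ℝ) + 1 := by
    have hc : ∀ k ∈ Finset.range (d + 1), maj B n d k = 1 := by
      intro k hk
      have : k ≤ d := by have := Finset.mem_range.1 hk; omega
      simp [maj, this]
    rw [Finset.sum_congr rfl hc, Finset.sum_const, Finset.card_range]
    push_cast; ring
  have h2 : ∑' k : ℕ, maj B n d (k + (d + 1)) =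
      ((n : ℝ) / (B : ℝ) ^ (d + 1)) * (1 - 1 / (B : ℝ))⁻¹ := by
    have heq : (fun k : ℕ => maj B n d (k + (d + 1))) =
        fun k => ((n : ℝ) / (B : ℝ) ^ (d + 1)) * (1 / (B : ℝ)) ^ k := by
      funext k
      have hk : ¬ (k + (d + 1) ≤ d) := by omega
      simp only [maj, hk, if_false, pow_add, one_div, inv_pow]
      field_simp
    rw [heq, tsum_mul_left, tsum_geometric_of_lt_one (by positivity) (hb_inv_lt hB)]
  rw [h1, h2]
  have hpow : (B : ℝ) ^ (d + 1) ≠ 0 := pow_ne_zero _ hBne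
  have hpow' : (B : ℝ) ^ d ≠ 0 := pow_ne_zero _ hBne
  have h3 : (1 - 1 / (B : ℝ))⁻¹ = (B : ℝ) / ((B : ℝ) - 1) := by
    rw [one_sub_div hBne, inv_div]
  rw [h3, pow_succ]
  field_simp

lemma sum_fract_le (hB : 2 ≤ B) {n : ℕ} {x : Fin (n + 1) → ℝ}
    (hx : x ∈ stdSimplex ℝ (Fin (n + 1))) (k : ℕ) :
    ∑ i, Int.fract ((B : ℝ) ^ k * x i) ≤ min ((B : ℝ) ^ k) (n : ℝ) := by
  obtain ⟨hx0, hx1⟩ := hx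
  have hBpos : (0 : ℝ) < B := by linarith [hb_one_lt hB]
  set z : ℤ := ∑ i, ⌊(B : ℝ) ^ k * x i⌋ with hz
  have hzsum : ∑ i, Int.fract ((B : ℝ) ^ k * x i) = (B : ℝ) ^ k - (z : ℝ) := by
    simp only [Int.fract]
    rw [Finset.sum_sub_distrib, ← Finset.mul_sum, hx1, mul_one, hz]
    push_cast
    ring
  have hz0 : (0 : ℤ) ≤ z :=
    Finset.sum_nonneg fun i _ => Int.floor_nonneg.2 (by have := hx0 i; positivity)
  have hlt : ∑ i, Int.fract ((B : ℝ) ^ k * x i) < (n : ℝ) + 1 := by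
    calc ∑ i, Int.fract ((B : ℝ) ^ k * x i) < ∑ _i : Fin (n + 1), (1 : ℝ) :=
          Finset.sum_lt_sum_of_nonempty Finset.univ_nonempty
            (fun i _ => Int.fract_lt_one _)
      _ = (n : ℝ) + 1 := by simp
  refine le_min ?_ ?_
  · rw [hzsum]
    have : (0 : ℝ) ≤ (z : ℝ) := by exact_mod_cast hz0
    linarith
  · rw [hzsum] at hlt ⊢
    have h2 : ((B : ℤ) ^ k - z : ℤ) < (n : ℤ) + 1 := by
      have : ((B : ℝ)) ^ k - (z : ℝ) < (n : ℝ) + 1 := hlt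
      exact_mod_cast this
    have h3 : ((B : ℤ) ^ k - z : ℤ) ≤ (n : ℤ) := Int.lt_add_one_iff.1 h2
    have h4 : ((B : ℝ)) ^ k - (z : ℝ) ≤ (n : ℝ) := by exact_mod_cast h3
    exact h4

lemma sum_HB_le (hB : 2 ≤ B) {n : ℕ} (d : ℕ) {x : Fin (n + 1) → ℝ}
    (hx : x ∈ stdSimplex ℝ (Fin (n + 1))) :
    ∑ i, HB B (x i) ≤ ∑' k, maj B n d k := by
  have hBpos : (0 : ℝ) < B := by linarith [hb_one_lt hB]
  have hswap : ∑ i, HB B (x i) =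
      ∑' k, (∑ i, Int.fract ((B : ℝ) ^ k * x i)) / (B : ℝ) ^ k := by
    unfold HB
    rw [← Summable.tsum_finsetSum (fun i _ => summable_hb hB (x i))]
    exact tsum_congr fun k => (Finset.sum_div _ _ _).symm
  have hle : ∀ k, (∑ i, Int.fract ((B : ℝ) ^ k * x i)) / (B : ℝ) ^ k ≤ maj B n d k := by
    intro k
    have hmin := sum_fract_le hB hx k
    have hpk : (0 : ℝ) < (B : ℝ) ^ k := by positivity
    unfold maj
    split
    · rw [div_le_one hpk]
      exact hmin.trans (min_le_left _ _)
    · exact (div_le_div_iff_of_pos_right hpk).2 (hmin.trans (min_le_right _ _))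
  rw [hswap]
  refine Summable.tsum_le_tsum hle ?_ (summable_maj hB n d)
  refine Summable.of_nonneg_of_le (fun k => ?_) hle (summable_maj hB n d)
  exact div_nonneg (Finset.sum_nonneg fun i _ => Int.fract_nonneg _) (by positivity)

lemma lower_bound (hB : 2 ≤ B) {n : ℕ} (hn : 1 ≤ n) :
    (∑' k, maj B n (Nat.log B n) k) ≤
      sSup ((fun x : Fin (n + 1) → ℝ => ∑ k : Fin (n + 1), HB B (x k)) ''
        stdSimplex ℝ (Fin (n + 1))) := by
  classical
  set d := Nat.log B n with hd
  set S := ((fun x : Fin (n + 1) → ℝ => ∑ k : Fin (n + 1), HB B (x k)) ''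
        stdSimplex ℝ (Fin (n + 1))) with hS
  have hB1 : 1 < B := by omega
  have hn0 : 0 < n := hn
  have hBR1 : (1 : ℝ) < B := hb_one_lt hB
  have hBpos : (0 : ℝ) < B := by linarith
  set b := B ^ (d + 1) with hb
  have hnb : n < b := Nat.lt_pow_succ_log_self hB1 n
  have hbn : b ≤ n * B := by
    have h1 : B ^ d ≤ n := Nat.pow_log_le_self B (by omega)
    calc b = B ^ d * B := by rw [hb, pow_succ]
      _ ≤ n * B := Nat.mul_le_mul_right _ h1
  set g : ℕ → ℕ := fun j => j * b / n with hg
  have hgmono : Monotone g := fun a a' h => Nat.div_le_div_right (Nat.mul_le_mul_right _ h)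
  set c : ℕ → ℕ := fun j => g (j + 1) - g j with hc
  have hcsum : ∑ j ∈ Finset.range n, c j = b := by
    rw [hc, Finset.sum_range_tsub hgmono]
    simp only [hg, Nat.zero_mul, Nat.zero_div, Nat.sub_zero]
    exact Nat.mul_div_cancel_left b hn0
  have hc1 : ∀ j, 1 ≤ c j := by
    intro j
    have h1 : g j + 1 ≤ g (j + 1) := by
      have h2 : (j * b + n) / n ≤ ((j + 1) * b) / n := by
        apply Nat.div_le_div_right
        have h3 : (j + 1) * b = j * b + b := by ring
        omega
      rwa [Nat.add_div_right _ hn0] at h2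
    simp only [hc]
    omega
  have hcB : ∀ j, c j ≤ B := by
    intro j
    have h1 : g (j + 1) ≤ g j + B := by
      have h2 : ((j + 1) * b) / n ≤ (j * b + n * B) / n := by
        apply Nat.div_le_div_right
        have h3 : (j + 1) * b = j * b + b := by ring
        omega
      rwa [Nat.add_mul_div_left _ _ hn0] at h2
    simp only [hc]
    omega
  set xc : ℕ → Fin (n + 1) → ℝ := fun K =>
    Fin.cons ((n : ℝ) / (B : ℝ) ^ K)
      (fun j : Fin n => (c j : ℝ) / (B : ℝ) ^ (d + 1) - 1 / (B : ℝ) ^ K) with hxc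
  have hub : ∀ v ∈ S, v ≤ ∑' k, maj B n d k := by
    rintro v ⟨x, hx, rfl⟩
    exact sum_HB_le hB d hx
  have hbdd : BddAbove S := ⟨_, hub⟩
  have hmain : ∀ K : ℕ, d + 1 ≤ K → n * B ^ d < B ^ K →
      (∑ k ∈ Finset.range K, maj B n d k) - n * K / (B : ℝ) ^ K ≤ sSup S := by
    intro K hK2 hK1
    have hpowK : (0 : ℝ) < (B : ℝ) ^ K := by positivity
    have hpowd1 : (0 : ℝ) < (B : ℝ) ^ (d + 1) := by positivity
    have hKle : 1 / (B : ℝ) ^ K ≤ 1 / (B : ℝ) ^ (d + 1) :=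
      one_div_le_one_div_of_le hpowd1 (pow_le_pow_right₀ (le_of_lt hBR1) hK2)
    have hnonneg : ∀ i, 0 ≤ xc K i := by
      intro i
      refine Fin.cases ?_ ?_ i
      · simp only [hxc, Fin.cons_zero]
        positivity
      · intro j
        simp only [hxc, Fin.cons_succ, sub_nonneg]
        refine hKle.trans ?_
        have : (1 : ℝ) ≤ (c j : ℝ) := by exact_mod_cast hc1 j
        exact (div_le_div_iff_of_pos_right hpowd1).2 this
    have hsum1 : ∑ i, xc K i = 1 := by
      rw [hxc]
      rw [Fin.sum_cons, Finset.sum_sub_distrib, ← Finset.sum_div]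
      have hsc : ∑ j : Fin n, (c j : ℝ) = (B : ℝ) ^ (d + 1) := by
        have e2 : ∑ j : Fin n, ((c j : ℕ) : ℝ) = ((∑ j ∈ Finset.range n, c j : ℕ) : ℝ) := by
          rw [Nat.cast_sum]
          exact Fin.sum_univ_eq_sum_range (fun m => ((c m : ℕ) : ℝ)) n
        rw [e2, hcsum, hb]
        push_cast
        ring
      rw [hsc, Finset.sum_const, Finset.card_univ, Fintype.card_fin]
      have hne1 : (B : ℝ) ^ (d + 1) ≠ 0 := ne_of_gt hpowd1
      have hne2 : (B : ℝ) ^ K ≠ 0 := ne_of_gt hpowK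
      field_simp
      have hX : (B : ℝ) ^ K * (1 / (B : ℝ) ^ K) = 1 := by field_simp
      rw [nsmul_eq_mul]
      linear_combination (-(n : ℝ)) * hX
    have hmem : xc K ∈ stdSimplex ℝ (Fin (n + 1)) := ⟨hnonneg, hsum1⟩
    -- every coordinate is < 1/B^d
    have hsmall : ∀ i, xc K i < 1 / (B : ℝ) ^ d := by
      intro i
      refine Fin.cases ?_ ?_ i
      · simp only [hxc, Fin.cons_zero]
        rw [div_lt_div_iff₀ hpowK (by positivity)]
        have : ((n * B ^ d : ℕ) : ℝ) < ((B ^ K : ℕ) : ℝ) := by exact_mod_cast hK1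
        push_cast at this
        linarith
      · intro j
        simp only [hxc, Fin.cons_succ]
        have h1 : (c j : ℝ) / (B : ℝ) ^ (d + 1) ≤ 1 / (B : ℝ) ^ d := by
          rw [div_le_div_iff₀ hpowd1 (by positivity), pow_succ]
          have : (c j : ℝ) ≤ (B : ℝ) := by exact_mod_cast hcB j
          nlinarith [pow_pos hBpos d]
        have h2 : (0 : ℝ) < 1 / (B : ℝ) ^ K := by positivity
        linarith
    -- the value estimate, k by k
    have hkbound : ∀ k ∈ Finset.range K,
        maj B n d k - (n : ℝ) / (B : ℝ) ^ K ≤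
          ∑ i, Int.fract ((B : ℝ) ^ k * xc K i) / (B : ℝ) ^ k := by
      intro k hk
      have hkK : k < K := Finset.mem_range.1 hk
      have hpk : (0 : ℝ) < (B : ℝ) ^ k := by positivity
      by_cases hkd : k ≤ d
      · -- all fractional parts are the values themselves
        have hfr : ∀ i, Int.fract ((B : ℝ) ^ k * xc K i) = (B : ℝ) ^ k * xc K i := by
          intro i
          refine Int.fract_eq_self.2 ⟨mul_nonneg (by positivity) (hnonneg i), ?_⟩
          have h1 : xc K i < 1 / (B : ℝ) ^ k := by
            refine (hsmall i).trans_le ?_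
            exact one_div_le_one_div_of_le hpk (pow_le_pow_right₀ (le_of_lt hBR1) hkd)
          calc (B : ℝ) ^ k * xc K i < (B : ℝ) ^ k * (1 / (B : ℝ) ^ k) :=
                mul_lt_mul_of_pos_left h1 hpk
            _ = 1 := by field_simp
        have hmaj : maj B n d k = 1 := by simp [maj, hkd]
        have hsum2 : ∑ i, Int.fract ((B : ℝ) ^ k * xc K i) / (B : ℝ) ^ k = 1 := by
          rw [Finset.sum_congr rfl (fun i _ => by rw [hfr i])]
          rw [← Finset.sum_div, ← Finset.mul_sum, hsum1, mul_one]
          field_simp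
        rw [hsum2, hmaj]
        have : (0 : ℝ) ≤ (n : ℝ) / (B : ℝ) ^ K := by positivity
        linarith
      · -- k > d : use the n nontrivial coordinates
        push_neg at hkd
        have hmaj : maj B n d k = (n : ℝ) / (B : ℝ) ^ k := by
          simp [maj, Nat.not_le.2 hkd]
        have hterm : ∀ j : Fin n,
            Int.fract ((B : ℝ) ^ k * xc K (j.succ)) = 1 - 1 / (B : ℝ) ^ (K - k) := by
          intro j
          have hxj : xc K j.succ = (c j : ℝ) / (B : ℝ) ^ (d + 1) - 1 / (B : ℝ) ^ K := by
            simp [hxc]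
          have hppow : (B : ℝ) ^ k = (B : ℝ) ^ (k - (d + 1)) * (B : ℝ) ^ (d + 1) := by
            rw [← pow_add]
            congr 1
            omega
          have hppow2 : (B : ℝ) ^ K = (B : ℝ) ^ (K - k) * (B : ℝ) ^ k := by
            rw [← pow_add]
            congr 1
            omega
          have hne1 : (B : ℝ) ^ (d + 1) ≠ 0 := ne_of_gt hpowd1
          have hne2 : (B : ℝ) ^ K ≠ 0 := ne_of_gt hpowK
          have hne3 : (B : ℝ) ^ (K - k) ≠ 0 := by positivity
          have e1 : (B : ℝ) ^ k / (B : ℝ) ^ (d + 1) = (B : ℝ) ^ (k - (d + 1)) := by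
            rw [hppow, mul_div_assoc, div_self hne1, mul_one]
          have e2 : (B : ℝ) ^ k / (B : ℝ) ^ K = 1 / (B : ℝ) ^ (K - k) := by
            rw [hppow2]
            rw [div_mul_eq_div_div_swap, div_self (ne_of_gt hpk)]
          have heq : (B : ℝ) ^ k * xc K (j.succ) =
              -(1 / (B : ℝ) ^ (K - k)) + ((c j * B ^ (k - (d + 1)) : ℕ) : ℤ) := by
            rw [hxj, mul_sub]
            rw [show (B : ℝ) ^ k * ((c j : ℝ) / (B : ℝ) ^ (d + 1)) =
              (c j : ℝ) * ((B : ℝ) ^ k / (B : ℝ) ^ (d + 1)) by ring, e1]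
            rw [show (B : ℝ) ^ k * (1 / (B : ℝ) ^ K) = (B : ℝ) ^ k / (B : ℝ) ^ K by ring, e2]
            push_cast
            ring
          rw [heq, Int.fract_add_intCast]
          have hθ : Int.fract (1 / (B : ℝ) ^ (K - k)) = 1 / (B : ℝ) ^ (K - k) := by
            refine Int.fract_eq_self.2 ⟨by positivity, ?_⟩
            rw [div_lt_one (by positivity)]
            have : (1 : ℝ) < (B : ℝ) ^ (K - k) := by
              apply one_lt_pow₀ hBR1
              omega
            linarith
          rw [Int.fract_neg (by rw [hθ]; positivity), hθ]
        calc maj B n d k - (n : ℝ) / (B : ℝ) ^ K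
            = ∑ j : Fin n, (1 - 1 / (B : ℝ) ^ (K - k)) / (B : ℝ) ^ k := by
              rw [Finset.sum_const, Finset.card_univ, Fintype.card_fin, hmaj]
              have hppow2 : (B : ℝ) ^ K = (B : ℝ) ^ (K - k) * (B : ℝ) ^ k := by
                rw [← pow_add]
                congr 1
                omega
              rw [hppow2]
              have hne3 : (B : ℝ) ^ (K - k) ≠ 0 := by positivity
              field_simp
              have hA : (B : ℝ) ^ (K - k) * (B : ℝ)⁻¹ ^ (K - k) = 1 := by
                rw [← mul_pow, mul_inv_cancel₀ hBpos.ne', one_pow]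
              have hB' : (B : ℝ) ^ k * (B : ℝ)⁻¹ ^ k = 1 := by
                rw [← mul_pow, mul_inv_cancel₀ hBpos.ne', one_pow]
              linear_combination ((n : ℝ) * (1 - (B : ℝ) ^ (K - k)) * ((B : ℝ) ^ k * (B : ℝ)⁻¹ ^ k)) * hA + ((n : ℝ) * (1 - (B : ℝ) ^ (K - k))) * hB'
          _ = ∑ j : Fin n, Int.fract ((B : ℝ) ^ k * xc K (j.succ)) / (B : ℝ) ^ k := by
              refine Finset.sum_congr rfl fun j _ => ?_
              rw [hterm j]
          _ ≤ ∑ i, Int.fract ((B : ℝ) ^ k * xc K i) / (B : ℝ) ^ k := by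
              rw [Fin.sum_univ_succ]
              refine le_add_of_nonneg_left ?_
              exact div_nonneg (Int.fract_nonneg _) (le_of_lt hpk)
    -- put it together
    have hchain : (∑ k ∈ Finset.range K, maj B n d k) - n * K / (B : ℝ) ^ K ≤
        ∑ i, HB B (xc K i) := by
      have e1 : (∑ k ∈ Finset.range K, maj B n d k) - n * K / (B : ℝ) ^ K =
          ∑ k ∈ Finset.range K, (maj B n d k - (n : ℝ) / (B : ℝ) ^ K) := by
        rw [Finset.sum_sub_distrib, Finset.sum_const, Finset.card_range]
        push_cast
        ring
      rw [e1]
      calc ∑ k ∈ Finset.range K, (maj B n d k - (n : ℝ) / (B : ℝ) ^ K)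
          ≤ ∑ k ∈ Finset.range K, ∑ i, Int.fract ((B : ℝ) ^ k * xc K i) / (B : ℝ) ^ k :=
            Finset.sum_le_sum hkbound
        _ = ∑ i, ∑ k ∈ Finset.range K, Int.fract ((B : ℝ) ^ k * xc K i) / (B : ℝ) ^ k :=
            Finset.sum_comm
        _ ≤ ∑ i, HB B (xc K i) := by
            refine Finset.sum_le_sum fun i _ => ?_
            exact Summable.sum_le_tsum (Finset.range K)
              (fun k _ => div_nonneg (Int.fract_nonneg _) (by positivity))
              (summable_hb hB (xc K i))
    refine hchain.trans ?_
    exact le_csSup hbdd ⟨xc K, hmem, rfl⟩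
  -- limit argument
  have hgeo : Filter.Tendsto (fun K => ∑ k ∈ Finset.range K, maj B n d k)
      Filter.atTop (nhds (∑' k, maj B n d k)) :=
    (summable_maj hB n d).hasSum.tendsto_sum_nat
  have herr : Filter.Tendsto (fun K : ℕ => (n : ℝ) * K / (B : ℝ) ^ K)
      Filter.atTop (nhds 0) := by
    have h0 : Summable (fun m : ℕ => (m : ℝ) ^ 1 * (1 / (B : ℝ)) ^ m) := by
      apply summable_pow_mul_geometric_of_norm_lt_one
      rw [Real.norm_eq_abs, abs_of_nonneg (by positivity)]
      exact hb_inv_lt hB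
    have hs := (h0.mul_left (n : ℝ)).tendsto_atTop_zero
    have heq2 : (fun m : ℕ => (n : ℝ) * ((m : ℝ) ^ 1 * (1 / (B : ℝ)) ^ m)) =
        fun K : ℕ => (n : ℝ) * K / (B : ℝ) ^ K := by
      funext m
      rw [pow_one, one_div, inv_pow]
      ring
    rwa [heq2] at hs
  have htend : Filter.Tendsto
      (fun K : ℕ => (∑ k ∈ Finset.range K, maj B n d k) - (n : ℝ) * K / (B : ℝ) ^ K)
      Filter.atTop (nhds (∑' k, maj B n d k)) := by
    have := hgeo.sub herr
    rwa [sub_zero] at this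
  refine le_of_tendsto htend ?_
  rw [Filter.eventually_atTop]
  refine ⟨n * B ^ d + d + 1, fun K hK => ?_⟩
  refine hmain K (by omega) ?_
  calc n * B ^ d < K := by omega
    _ < 2 ^ K := Nat.lt_two_pow_self
    _ ≤ B ^ K := Nat.pow_le_pow_left hB K

end Aux

theorem stmt5 (B n : ℕ) (hB : 2 ≤ B) (hn : 1 ≤ n) :
    sSup ((fun x : Fin (n + 1) → ℝ => ∑ k : Fin (n + 1), HB B (x k)) ''
        stdSimplex ℝ (Fin (n + 1))) =
      (⌊Real.logb B n⌋ : ℝ) + 1 +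
        (n : ℝ) / (((B : ℝ) - 1) * (B : ℝ) ^ ⌊Real.logb B n⌋) := by
  have hn0 : (0 : ℝ) ≤ (n : ℕ) := Nat.cast_nonneg n
  have hfloor : ⌊Real.logb B n⌋ = (Nat.log B n : ℤ) := by
    rw [Real.floor_logb_natCast hn0, Int.log_natCast]
  have hrhs : (⌊Real.logb B n⌋ : ℝ) + 1 +
      (n : ℝ) / (((B : ℝ) - 1) * (B : ℝ) ^ ⌊Real.logb B n⌋) =
      ∑' k, maj B n (Nat.log B n) k := by
    rw [tsum_maj hB n (Nat.log B n), hfloor]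
    rw [zpow_natCast]
    push_cast
    ring
  rw [hrhs]
  refine le_antisymm ?_ (lower_bound hB hn)
  have hne : ((fun x : Fin (n + 1) → ℝ => ∑ k : Fin (n + 1), HB B (x k)) ''
      stdSimplex ℝ (Fin (n + 1))).Nonempty := by
    refine ⟨_, ⟨fun i => if i = 0 then (1 : ℝ) else 0, ⟨?_, ?_⟩, rfl⟩⟩
    · intro i
      by_cases h : i = 0 <;> simp [h]
    · simp
  refine csSup_le hne ?_
  rintro v ⟨x, hx, rfl⟩
  exact sum_HB_le hB (Nat.log B n) hx
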